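/- Let ℓ > 0, N > 0, and let φ : [0,ℓ]×[−N,N] → ℝ be twice continuously differentiable and satisfy: (i) ∂²φ/∂s² + ∂²φ/∂z² + 2cosh⁻²(s)φ = 0 on [0,ℓ]×[−N,N]; (ii) the Dirichlet condition φ(0,z) = 0 for all z; (iii) the Robin condition ∂_sφ(ℓ,z)·tanh(ℓ) − φ(ℓ,z)·cosh⁻²(ℓ) = 0 for all z ∈ [−N,N]; (iv) the Neumann condition ∂_zφ(s,±N) = 0 for all s ∈ [0,ℓ]. Then there is a constant c ∈ ℝ such that φ(s,z) = c·tanh(s) for all (s,z). -/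

import Mathlib

open Real MeasureTheory Set

open Real MeasureTheory Set

/-! ### Auxiliary facts about `tanh` and the logarithmic derivative `pfun` -/

lemma tanh_hasDerivAt' (s : ℝ) : HasDerivAt Real.tanh ((Real.cosh s ^ 2)⁻¹) s := by
  have h : HasDerivAt (fun t => Real.sinh t / Real.cosh t)
      ((Real.cosh s * Real.cosh s - Real.sinh s * Real.sinh s) / Real.cosh s ^ 2) s :=
    (Real.hasDerivAt_sinh s).div (Real.hasDerivAt_cosh s) (ne_of_gt (Real.cosh_pos s))
  have h2 : (Real.cosh s * Real.cosh s - Real.sinh s * Real.sinh s) / Real.cosh s ^ 2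
      = (Real.cosh s ^ 2)⁻¹ := by
    have := Real.cosh_sq_sub_sinh_sq s
    field_simp; nlinarith [this]
  rw [h2] at h
  exact h.congr_of_eventuallyEq (by
    filter_upwards with t using (Real.tanh_eq_sinh_div_cosh t))

lemma continuous_tanh' : Continuous Real.tanh := by
  have : Real.tanh = fun t => Real.sinh t / Real.cosh t := funext Real.tanh_eq_sinh_div_cosh
  rw [this]
  exact Real.continuous_sinh.div Real.continuous_cosh fun t => ne_of_gt (Real.cosh_pos t)

lemma tanh_pos' {s : ℝ} (h : 0 < s) : 0 < Real.tanh s := by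
  rw [Real.tanh_eq_sinh_div_cosh]
  exact div_pos (by rwa [Real.sinh_pos_iff]) (Real.cosh_pos s)

noncomputable def pfun (t : ℝ) : ℝ := (Real.cosh t ^ 2)⁻¹ / Real.tanh t

lemma pfun_hasDerivAt {t : ℝ} (ht : 0 < t) :
    HasDerivAt pfun (-(2 * (Real.cosh t ^ 2)⁻¹) - pfun t ^ 2) t := by
  have hc : Real.cosh t ≠ 0 := ne_of_gt (Real.cosh_pos t)
  have hT : Real.tanh t ≠ 0 := ne_of_gt (tanh_pos' ht)
  have hu : HasDerivAt (fun x => (Real.cosh x ^ 2)⁻¹)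
      (-(2 * Real.cosh t ^ 1 * Real.sinh t) / (Real.cosh t ^ 2) ^ 2) t := by
    have h1 : HasDerivAt (fun x => Real.cosh x ^ 2) (2 * Real.cosh t ^ 1 * Real.sinh t) t :=
      (Real.hasDerivAt_cosh t).pow 2
    exact h1.inv (pow_ne_zero 2 hc)
  have h := hu.div (tanh_hasDerivAt' t) hT
  convert h using 1
  · rfl
  · rfl
  · rfl
  rw [Real.tanh_eq_sinh_div_cosh, pfun, Real.tanh_eq_sinh_div_cosh]
  have hs : Real.sinh t ≠ 0 := ne_of_gt (by rwa [Real.sinh_pos_iff])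
  have hcs := Real.cosh_sq_sub_sinh_sq t
  field_simp

lemma pfun_continuousOn : ContinuousOn pfun {t : ℝ | 0 < t} := by
  apply ContinuousOn.div
  · exact (Real.continuous_cosh.pow 2).continuousOn.inv₀
      (fun t _ => pow_ne_zero 2 (ne_of_gt (Real.cosh_pos t)))
  · exact continuous_tanh'.continuousOn
  · exact fun t ht => ne_of_gt (tanh_pos' ht)

lemma pfun_mul_le {ε : ℝ} (h0 : 0 < ε) (h1 : ε ≤ 1) : pfun ε * ε ≤ Real.cosh 1 := by
  have htp : 0 < Real.tanh ε := tanh_pos' h0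
  have hsinh : ε ≤ Real.sinh ε := Real.self_le_sinh_iff.2 h0.le
  have hcosh : Real.cosh ε ≤ Real.cosh 1 := by
    rw [Real.cosh_le_cosh]
    rw [abs_of_pos h0, abs_one]; exact h1
  have hc1 : (0:ℝ) < Real.cosh 1 := Real.cosh_pos 1
  have hce : (0:ℝ) < Real.cosh ε := Real.cosh_pos ε
  have htanh : ε / Real.cosh 1 ≤ Real.tanh ε := by
    rw [Real.tanh_eq_sinh_div_cosh]
    rw [div_le_div_iff₀ hc1 hce]
    nlinarith [mul_le_mul hsinh hcosh hce.le (lt_of_lt_of_le h0 hsinh).le]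
  calc pfun ε * ε ≤ (Real.tanh ε)⁻¹ * ε := by
        apply mul_le_mul_of_nonneg_right _ h0.le
        rw [pfun, div_eq_mul_inv]
        apply mul_le_of_le_one_left (inv_nonneg.2 htp.le)
        rw [inv_le_one_iff₀]
        right
        rw [Real.cosh_sq]
        nlinarith [sq_nonneg (Real.sinh ε), Real.cosh_sq ε]
    _ ≤ (ε / Real.cosh 1)⁻¹ * ε := by
        apply mul_le_mul_of_nonneg_right _ h0.le
        exact inv_anti₀ (div_pos h0 hc1) htanh
    _ = Real.cosh 1 := by field_simp

/-! ### Partial derivative notations -/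

noncomputable def fsP (φ : ℝ × ℝ → ℝ) (x : ℝ × ℝ) : ℝ := fderiv ℝ φ x (1, 0)
noncomputable def fzP (φ : ℝ × ℝ → ℝ) (x : ℝ × ℝ) : ℝ := fderiv ℝ φ x (0, 1)
noncomputable def Ffun (φ : ℝ × ℝ → ℝ) (x : ℝ × ℝ) : ℝ :=
  φ x * fsP φ x - pfun x.1 * (φ x * φ x)
noncomputable def Gfun (φ : ℝ × ℝ → ℝ) (x : ℝ × ℝ) : ℝ := φ x * fzP φ x
noncomputable def Qfun (φ : ℝ × ℝ → ℝ) (x : ℝ × ℝ) : ℝ :=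
  (fsP φ x - pfun x.1 * φ x) ^ 2 + fzP φ x ^ 2

/-! ### Partial derivatives -/

section Partial

variable {φ : ℝ × ℝ → ℝ}

lemma hφ_diff (hφ : ContDiff ℝ 2 φ) : Differentiable ℝ φ := hφ.differentiable (by norm_num)

lemma fsP_contDiff (hφ : ContDiff ℝ 2 φ) : ContDiff ℝ 1 (fsP φ) :=
  (hφ.fderiv_right (by norm_num)).clm_apply contDiff_const

lemma fzP_contDiff (hφ : ContDiff ℝ 2 φ) : ContDiff ℝ 1 (fzP φ) :=
  (hφ.fderiv_right (by norm_num)).clm_apply contDiff_const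

lemma hds (hφ : ContDiff ℝ 2 φ) (x : ℝ × ℝ) : HasDerivAt (fun s' => φ (s', x.2)) (fsP φ x) x.1 := by
  have h1 : HasFDerivAt φ (fderiv ℝ φ x) x := (hφ_diff hφ x).hasFDerivAt
  have h2 : HasDerivAt (fun s' : ℝ => (s', x.2)) ((1:ℝ), (0:ℝ)) x.1 :=
    (hasDerivAt_id x.1).prodMk (hasDerivAt_const x.1 x.2)
  exact h1.comp_hasDerivAt x.1 h2

lemma hdz (hφ : ContDiff ℝ 2 φ) (x : ℝ × ℝ) : HasDerivAt (fun z' => φ (x.1, z')) (fzP φ x) x.2 := by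
  have h1 : HasFDerivAt φ (fderiv ℝ φ x) x := (hφ_diff hφ x).hasFDerivAt
  have h2 : HasDerivAt (fun z' : ℝ => (x.1, z')) ((0:ℝ), (1:ℝ)) x.2 :=
    (hasDerivAt_const x.2 x.1).prodMk (hasDerivAt_id x.2)
  exact h1.comp_hasDerivAt x.2 h2

lemma hdss (hφ : ContDiff ℝ 2 φ) (x : ℝ × ℝ) :
    HasDerivAt (fun s' => fsP φ (s', x.2)) (fderiv ℝ (fsP φ) x (1, 0)) x.1 := by
  have h1 : HasFDerivAt (fsP φ) (fderiv ℝ (fsP φ) x) x :=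
    (((fsP_contDiff hφ).differentiable (by norm_num)) x).hasFDerivAt
  have h2 : HasDerivAt (fun s' : ℝ => (s', x.2)) ((1:ℝ), (0:ℝ)) x.1 :=
    (hasDerivAt_id x.1).prodMk (hasDerivAt_const x.1 x.2)
  exact h1.comp_hasDerivAt x.1 h2

lemma hdzz (hφ : ContDiff ℝ 2 φ) (x : ℝ × ℝ) :
    HasDerivAt (fun z' => fzP φ (x.1, z')) (fderiv ℝ (fzP φ) x (0, 1)) x.2 := by
  have h1 : HasFDerivAt (fzP φ) (fderiv ℝ (fzP φ) x) x :=
    (((fzP_contDiff hφ).differentiable (by norm_num)) x).hasFDerivAt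
  have h2 : HasDerivAt (fun z' : ℝ => (x.1, z')) ((0:ℝ), (1:ℝ)) x.2 :=
    (hasDerivAt_const x.2 x.1).prodMk (hasDerivAt_id x.2)
  exact h1.comp_hasDerivAt x.2 h2

/-- The derivative of `F` (as a continuous linear map). -/
noncomputable def Fder (φ : ℝ × ℝ → ℝ) (x : ℝ × ℝ) : ℝ × ℝ →L[ℝ] ℝ :=
  (φ x • (fderiv ℝ (fsP φ) x) + fsP φ x • fderiv ℝ φ x)
    - (pfun x.1 • (φ x • fderiv ℝ φ x + φ x • fderiv ℝ φ x)
        + (φ x * φ x) • ((-(2 * (Real.cosh x.1 ^ 2)⁻¹) - pfun x.1 ^ 2) •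
            ContinuousLinearMap.fst ℝ ℝ ℝ))

noncomputable def Gder (φ : ℝ × ℝ → ℝ) (x : ℝ × ℝ) : ℝ × ℝ →L[ℝ] ℝ :=
  φ x • (fderiv ℝ (fzP φ) x) + fzP φ x • fderiv ℝ φ x

lemma hasFDerivAt_Ffun (hφ : ContDiff ℝ 2 φ) {x : ℝ × ℝ} (hx : 0 < x.1) :
    HasFDerivAt (Ffun φ) (Fder φ x) x := by
  have hφd : HasFDerivAt φ (fderiv ℝ φ x) x := (hφ_diff hφ x).hasFDerivAt
  have hfsd : HasFDerivAt (fsP φ) (fderiv ℝ (fsP φ) x) x :=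
    (((fsP_contDiff hφ).differentiable (by norm_num)) x).hasFDerivAt
  have hp : HasFDerivAt (fun y : ℝ × ℝ => pfun y.1)
      ((-(2 * (Real.cosh x.1 ^ 2)⁻¹) - pfun x.1 ^ 2) • ContinuousLinearMap.fst ℝ ℝ ℝ) x :=
    (pfun_hasDerivAt hx).comp_hasFDerivAt x hasFDerivAt_fst
  exact (hφd.mul hfsd).sub (hp.mul (hφd.mul hφd))

lemma hasFDerivAt_Gfun (hφ : ContDiff ℝ 2 φ) (x : ℝ × ℝ) : HasFDerivAt (Gfun φ) (Gder φ x) x := by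
  have hφd : HasFDerivAt φ (fderiv ℝ φ x) x := (hφ_diff hφ x).hasFDerivAt
  have hfzd : HasFDerivAt (fzP φ) (fderiv ℝ (fzP φ) x) x :=
    (((fzP_contDiff hφ).differentiable (by norm_num)) x).hasFDerivAt
  exact hφd.mul hfzd

/-- The divergence of `(F, G)` equals `Q`, given the PDE. -/
lemma div_eq_Q {x : ℝ × ℝ}
    (hpde : fderiv ℝ (fsP φ) x (1, 0) + fderiv ℝ (fzP φ) x (0, 1)
      + 2 * ((Real.cosh x.1) ^ 2)⁻¹ * φ x = 0) :
    Fder φ x (1, 0) + Gder φ x (0, 1) = Qfun φ x := by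
  have h1 : Fder φ x (1, 0) = φ x * (fderiv ℝ (fsP φ) x (1, 0)) + fsP φ x * fsP φ x
      - (pfun x.1 * (φ x * fsP φ x + φ x * fsP φ x)
          + (φ x * φ x) * (-(2 * (Real.cosh x.1 ^ 2)⁻¹) - pfun x.1 ^ 2)) := by
    simp [Fder, fsP, ContinuousLinearMap.add_apply, ContinuousLinearMap.smul_apply,
      ContinuousLinearMap.sub_apply]
    ring
  have h2 : Gder φ x (0, 1) = φ x * (fderiv ℝ (fzP φ) x (0, 1)) + fzP φ x * fzP φ x := by
    simp [Gder, fzP, ContinuousLinearMap.add_apply, ContinuousLinearMap.smul_apply]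
  rw [h1, h2, Qfun]
  linear_combination (φ x) * hpde

end Partial

lemma Qfun_contOn {φ : ℝ × ℝ → ℝ} (hφ : ContDiff ℝ 2 φ) :
    ContinuousOn (Qfun φ) {x : ℝ × ℝ | 0 < x.1} := by
  have hpf : ContinuousOn (fun x : ℝ × ℝ => pfun x.1) {x : ℝ × ℝ | 0 < x.1} :=
    pfun_continuousOn.comp continuous_fst.continuousOn (fun x hx => hx)
  exact (((((fsP_contDiff hφ).continuous.continuousOn.sub
    (hpf.mul (hφ.continuous.continuousOn))).pow 2).add
    (((fzP_contDiff hφ).continuous.pow 2).continuousOn))).congr (fun x hx => rfl)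

lemma Ffun_contOn {φ : ℝ × ℝ → ℝ} (hφ : ContDiff ℝ 2 φ) :
    ContinuousOn (Ffun φ) {x : ℝ × ℝ | 0 < x.1} := by
  have hpf : ContinuousOn (fun x : ℝ × ℝ => pfun x.1) {x : ℝ × ℝ | 0 < x.1} :=
    pfun_continuousOn.comp continuous_fst.continuousOn (fun x hx => hx)
  exact ((hφ.continuous.continuousOn.mul (fsP_contDiff hφ).continuous.continuousOn).sub
    (hpf.mul (hφ.continuous.continuousOn.mul hφ.continuous.continuousOn))).congr
    (fun x hx => rfl)

lemma key_integral {φ : ℝ × ℝ → ℝ} (hφ : ContDiff ℝ 2 φ) {ℓ N : ℝ} (hℓ : 0 < ℓ) (hN : 0 < N)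
    (hPDE2 : ∀ x ∈ Set.Icc (0:ℝ) ℓ ×ˢ Set.Icc (-N) N,
      fderiv ℝ (fsP φ) x (1,0) + fderiv ℝ (fzP φ) x (0,1)
        + 2 * ((Real.cosh x.1)^2)⁻¹ * φ x = 0)
    (hRobin2 : ∀ z ∈ Set.Icc (-N) N,
      fsP φ (ℓ,z) * Real.tanh ℓ - φ (ℓ,z) * ((Real.cosh ℓ)^2)⁻¹ = 0)
    (hNeu2 : ∀ s ∈ Set.Icc (0:ℝ) ℓ, fzP φ (s,N) = 0 ∧ fzP φ (s,-N) = 0)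
    {ε : ℝ} (hε0 : 0 < ε) (hεℓ : ε ≤ ℓ) :
    ∫ x in Set.Icc ((ε,-N) : ℝ × ℝ) ((ℓ,N) : ℝ × ℝ), Qfun φ x
      = - ∫ y in (-N)..N, Ffun φ (ε,y) := by
  have hle : ((ε,-N) : ℝ × ℝ) ≤ ((ℓ,N) : ℝ × ℝ) := ⟨hεℓ, by simp; linarith⟩
  have hIccEq : Set.Icc ((ε,-N) : ℝ × ℝ) ((ℓ,N) : ℝ × ℝ)
      = Set.Icc ε ℓ ×ˢ Set.Icc (-N) N := Icc_prod_eq _ _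
  have hsubpos : Set.Icc ((ε,-N) : ℝ × ℝ) ((ℓ,N) : ℝ × ℝ) ⊆ {x : ℝ × ℝ | 0 < x.1} := by
    rw [hIccEq]; rintro ⟨a, b⟩ ⟨⟨h1, _⟩, _⟩; exact lt_of_lt_of_le hε0 h1
  have hsubR : Set.Icc ((ε,-N) : ℝ × ℝ) ((ℓ,N) : ℝ × ℝ)
      ⊆ Set.Icc (0:ℝ) ℓ ×ˢ Set.Icc (-N) N := by
    rw [hIccEq]
    exact Set.prod_mono (Set.Icc_subset_Icc hε0.le le_rfl) subset_rfl
  have hQeq : Set.EqOn (fun x => Fder φ x (1,0) + Gder φ x (0,1)) (Qfun φ)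
      (Set.Icc ((ε,-N) : ℝ × ℝ) ((ℓ,N) : ℝ × ℝ)) :=
    fun x hx => div_eq_Q (hPDE2 x (hsubR hx))
  have hQint : IntegrableOn (Qfun φ) (Set.Icc ((ε,-N) : ℝ × ℝ) ((ℓ,N) : ℝ × ℝ)) :=
    ContinuousOn.integrableOn_compact isCompact_Icc ((Qfun_contOn hφ).mono hsubpos)
  have hi : IntegrableOn (fun x => Fder φ x (1,0) + Gder φ x (0,1))
      (Set.Icc ((ε,-N) : ℝ × ℝ) ((ℓ,N) : ℝ × ℝ)) :=
    hQint.congr_fun (fun x hx => (hQeq hx).symm) measurableSet_Icc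
  have main := integral_divergence_prod_Icc_of_hasFDerivAt_off_countable_of_le
    (Ffun φ) (Gfun φ) (Fder φ) (Gder φ) ((ε,-N) : ℝ × ℝ) ((ℓ,N) : ℝ × ℝ) hle ∅
    Set.countable_empty
    ((Ffun_contOn hφ).mono hsubpos)
    (((hφ.continuous.mul (fzP_contDiff hφ).continuous)).continuousOn)
    (by
      rintro x ⟨hx, -⟩
      rcases hx with ⟨hx1, -⟩
      exact hasFDerivAt_Ffun hφ (lt_trans hε0 hx1.1))
    (fun x _ => hasFDerivAt_Gfun hφ x)
    hi
  rw [setIntegral_congr_fun measurableSet_Icc hQeq] at main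
  rw [main]
  have hG1 : (∫ x in ε..ℓ, Gfun φ (x, N)) = 0 := by
    rw [intervalIntegral.integral_congr (g := fun _ => (0:ℝ))
      (fun x hx => by
        rw [Set.uIcc_of_le hεℓ] at hx
        simp [Gfun, (hNeu2 x (Set.Icc_subset_Icc hε0.le le_rfl hx)).1]),
      intervalIntegral.integral_zero]
  have hG2 : (∫ x in ε..ℓ, Gfun φ (x, -N)) = 0 := by
    rw [intervalIntegral.integral_congr (g := fun _ => (0:ℝ))
      (fun x hx => by
        rw [Set.uIcc_of_le hεℓ] at hx
        simp [Gfun, (hNeu2 x (Set.Icc_subset_Icc hε0.le le_rfl hx)).2]),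
      intervalIntegral.integral_zero]
  have hF1 : (∫ y in (-N)..N, Ffun φ (ℓ, y)) = 0 := by
    rw [intervalIntegral.integral_congr (g := fun _ => (0:ℝ))
      (fun y hy => by
        rw [Set.uIcc_of_le (by linarith : -N ≤ N)] at hy
        have ht : Real.tanh ℓ ≠ 0 := ne_of_gt (tanh_pos' hℓ)
        have hfs : fsP φ (ℓ, y) = φ (ℓ, y) * ((Real.cosh ℓ)^2)⁻¹ / Real.tanh ℓ := by
          rw [eq_div_iff ht]
          linarith [hRobin2 y hy]
        show Ffun φ (ℓ, y) = 0
        rw [Ffun, pfun, hfs]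
        ring),
      intervalIntegral.integral_zero]
  rw [hG1, hG2, hF1]
  ring

lemma Qfun_nonneg (φ : ℝ × ℝ → ℝ) (x : ℝ × ℝ) : 0 ≤ Qfun φ x := by
  rw [Qfun]; positivity

lemma Q_vanishes {φ : ℝ × ℝ → ℝ} (hφ : ContDiff ℝ 2 φ) {ℓ N : ℝ} (hℓ : 0 < ℓ) (hN : 0 < N)
    (hPDE2 : ∀ x ∈ Set.Icc (0:ℝ) ℓ ×ˢ Set.Icc (-N) N,
      fderiv ℝ (fsP φ) x (1,0) + fderiv ℝ (fzP φ) x (0,1)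
        + 2 * ((Real.cosh x.1)^2)⁻¹ * φ x = 0)
    (hDir : ∀ z ∈ Set.Icc (-N) N, φ (0, z) = 0)
    (hRobin2 : ∀ z ∈ Set.Icc (-N) N,
      fsP φ (ℓ,z) * Real.tanh ℓ - φ (ℓ,z) * ((Real.cosh ℓ)^2)⁻¹ = 0)
    (hNeu2 : ∀ s ∈ Set.Icc (0:ℝ) ℓ, fzP φ (s,N) = 0 ∧ fzP φ (s,-N) = 0)
    {x₀ : ℝ × ℝ} (hx₀ : x₀ ∈ Set.Ioo (0:ℝ) ℓ ×ˢ Set.Ioo (-N) N) :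
    Qfun φ x₀ = 0 := by
  -- the uniform bound M
  obtain ⟨M₀, hM₀⟩ := IsCompact.exists_bound_of_continuousOn
    (isCompact_Icc : IsCompact (Set.Icc ((0:ℝ),-N) ((ℓ,N))))
    (fsP_contDiff hφ).continuous.continuousOn
  set M : ℝ := max M₀ 1 with hM
  have hM1 : (1:ℝ) ≤ M := le_max_right _ _
  have hM0 : (0:ℝ) < M := lt_of_lt_of_le one_pos hM1
  have hmemK : ∀ s ∈ Set.Icc (0:ℝ) ℓ, ∀ z ∈ Set.Icc (-N) N,
      ((s,z) : ℝ × ℝ) ∈ Set.Icc ((0:ℝ),-N) ((ℓ,N)) := by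
    intro s hs z hz
    rw [Icc_prod_eq]; exact ⟨hs, hz⟩
  have hfs_bound : ∀ s ∈ Set.Icc (0:ℝ) ℓ, ∀ z ∈ Set.Icc (-N) N, |fsP φ (s,z)| ≤ M :=
    fun s hs z hz => le_trans (hM₀ _ (hmemK s hs z hz)) (le_max_left _ _)
  have hφ_bound : ∀ s ∈ Set.Icc (0:ℝ) ℓ, ∀ z ∈ Set.Icc (-N) N, |φ (s,z)| ≤ M * s := by
    intro s hs z hz
    have key : ‖φ (s, z) - φ (0, z)‖ ≤ M * ‖s - (0:ℝ)‖ :=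
      Convex.norm_image_sub_le_of_norm_hasDerivWithin_le
        (f := fun σ => φ (σ, z)) (f' := fun σ => fsP φ (σ, z)) (s := Set.Icc (0:ℝ) ℓ)
        (fun σ hσ => (hds hφ (σ, z)).hasDerivWithinAt)
        (fun σ hσ => hfs_bound σ hσ z hz) (convex_Icc _ _)
        (Set.left_mem_Icc.2 (le_trans hs.1 hs.2)) hs
    rw [hDir z hz] at key
    simpa [abs_of_nonneg hs.1] using key
  -- the constant C
  set C : ℝ := M * M * (1 + Real.cosh 1) with hC
  have hC0 : 0 < C := by positivity
  have hF_bound : ∀ ε, 0 < ε → ε ≤ ℓ → ε ≤ 1 → ∀ y ∈ Set.Icc (-N) N,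
      |Ffun φ (ε, y)| ≤ C * ε := by
    intro ε h0 h1 h2 y hy
    have hεm : ε ∈ Set.Icc (0:ℝ) ℓ := ⟨h0.le, h1⟩
    have h3 : |φ (ε,y)| ≤ M * ε := hφ_bound ε hεm y hy
    have h4 : |fsP φ (ε,y)| ≤ M := hfs_bound ε hεm y hy
    have h5 : pfun ε * ε ≤ Real.cosh 1 := pfun_mul_le h0 h2
    have h6 : 0 < pfun ε := div_pos (by positivity) (tanh_pos' h0)
    rw [Ffun]
    have habs : |φ (ε,y) * fsP φ (ε,y) - pfun ε * (φ (ε,y) * φ (ε,y))|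
        ≤ |φ (ε,y)| * |fsP φ (ε,y)| + pfun ε * (|φ (ε,y)| * |φ (ε,y)|) := by
      calc _ ≤ |φ (ε,y) * fsP φ (ε,y)| + |pfun ε * (φ (ε,y) * φ (ε,y))| := abs_sub _ _
        _ = |φ (ε,y)| * |fsP φ (ε,y)| + pfun ε * (|φ (ε,y)| * |φ (ε,y)|) := by
            rw [abs_mul, abs_mul, abs_mul, abs_of_pos h6]
    refine le_trans habs ?_
    have k1 : |φ (ε,y)| * |fsP φ (ε,y)| ≤ (M * ε) * M :=
      mul_le_mul h3 h4 (abs_nonneg _) (by positivity)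
    have k2 : pfun ε * (|φ (ε,y)| * |φ (ε,y)|) ≤ pfun ε * ((M * ε) * (M * ε)) := by
      apply mul_le_mul_of_nonneg_left _ h6.le
      exact mul_le_mul h3 h3 (abs_nonneg _) (by positivity)
    have k3 : pfun ε * ((M * ε) * (M * ε)) = (pfun ε * ε) * (M * M * ε) := by ring
    have k4 : (pfun ε * ε) * (M * M * ε) ≤ Real.cosh 1 * (M * M * ε) := by
      apply mul_le_mul_of_nonneg_right h5 (by positivity)
    rw [hC]
    nlinarith
  -- the integral over [ε₀, ℓ] × [-N, N] vanishes
  set ε₀ : ℝ := x₀.1 / 2 with hε₀def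
  have hx₀1 : 0 < x₀.1 := hx₀.1.1
  have hε₀pos : 0 < ε₀ := by positivity
  have hε₀ℓ : ε₀ ≤ ℓ := by
    have := hx₀.1.2
    simp only [hε₀def]; linarith
  have hQint : ∀ ε, 0 < ε → ε ≤ ℓ →
      IntegrableOn (Qfun φ) (Set.Icc ((ε,-N) : ℝ × ℝ) ((ℓ,N))) := by
    intro ε h0 h1
    apply ContinuousOn.integrableOn_compact isCompact_Icc
    apply (Qfun_contOn hφ).mono
    rw [Icc_prod_eq]
    rintro ⟨a, b⟩ ⟨⟨ha, _⟩, _⟩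
    exact lt_of_lt_of_le h0 ha
  have hIzero : ∫ x in Set.Icc ((ε₀,-N) : ℝ × ℝ) ((ℓ,N)), Qfun φ x = 0 := by
    have hnonneg : 0 ≤ ∫ x in Set.Icc ((ε₀,-N) : ℝ × ℝ) ((ℓ,N)), Qfun φ x :=
      setIntegral_nonneg measurableSet_Icc (fun x _ => Qfun_nonneg φ x)
    have hle0 : ∫ x in Set.Icc ((ε₀,-N) : ℝ × ℝ) ((ℓ,N)), Qfun φ x ≤ 0 := by
      apply le_of_forall_pos_le_add
      intro δ hδ
      rw [zero_add]
      set ε : ℝ := min ε₀ (min 1 (δ / (2 * N * C + 1))) with hεdef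
      have hεpos : 0 < ε := by
        apply lt_min hε₀pos
        apply lt_min one_pos
        positivity
      have hεℓ : ε ≤ ℓ := le_trans (min_le_left _ _) hε₀ℓ
      have hε1 : ε ≤ 1 := le_trans (min_le_right _ _) (min_le_left _ _)
      have hεδ : ε ≤ δ / (2 * N * C + 1) := le_trans (min_le_right _ _) (min_le_right _ _)
      have hmono : ∫ x in Set.Icc ((ε₀,-N) : ℝ × ℝ) ((ℓ,N)), Qfun φ x
          ≤ ∫ x in Set.Icc ((ε,-N) : ℝ × ℝ) ((ℓ,N)), Qfun φ x := by
        apply setIntegral_mono_set (hQint ε hεpos hεℓ)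
          (Filter.Eventually.of_forall (fun x => Qfun_nonneg φ x))
        apply HasSubset.Subset.eventuallyLE
        apply Set.Icc_subset_Icc _ le_rfl
        exact ⟨min_le_left _ _, le_rfl⟩
      have hkey := key_integral hφ hℓ hN hPDE2 hRobin2 hNeu2 hεpos hεℓ
      rw [hkey] at hmono
      have hbnd : ‖∫ y in (-N)..N, Ffun φ (ε, y)‖ ≤ C * ε * |N - (-N)| := by
        apply intervalIntegral.norm_integral_le_of_norm_le_const
        intro y hy
        have hy' : y ∈ Set.Icc (-N) N := by
          rw [Set.uIoc_of_le (by linarith : -N ≤ N)] at hy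
          exact ⟨hy.1.le, hy.2⟩
        rw [Real.norm_eq_abs]
        exact hF_bound ε hεpos hεℓ hε1 y hy'
      rw [Real.norm_eq_abs] at hbnd
      have habs2 : |N - (-N)| = 2 * N := by rw [abs_of_pos (by linarith)]; ring
      rw [habs2] at hbnd
      have : - ∫ y in (-N)..N, Ffun φ (ε, y) ≤ C * ε * (2 * N) :=
        le_trans (neg_le_abs _) hbnd
      refine le_trans hmono (le_trans this ?_)
      have : C * ε * (2 * N) ≤ (2 * N * C + 1) * (δ / (2 * N * C + 1)) := by
        have h2NC : 0 < 2 * N * C + 1 := by positivity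
        calc C * ε * (2 * N) = (2 * N * C) * ε := by ring
          _ ≤ (2 * N * C + 1) * ε := by nlinarith
          _ ≤ (2 * N * C + 1) * (δ / (2 * N * C + 1)) := by
              apply mul_le_mul_of_nonneg_left hεδ h2NC.le
      refine le_trans this ?_
      rw [mul_div_cancel₀]
      positivity
    linarith
  -- pointwise vanishing via continuity
  by_contra hne
  have hQpos : 0 < Qfun φ x₀ := lt_of_le_of_ne (Qfun_nonneg φ x₀) (Ne.symm hne)
  have hopen : IsOpen {x : ℝ × ℝ | 0 < x.1} := isOpen_lt continuous_const continuous_fst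
  have hcontAt : ContinuousAt (Qfun φ) x₀ :=
    (Qfun_contOn hφ).continuousAt (hopen.mem_nhds hx₀1)
  have hU : {x : ℝ × ℝ | Qfun φ x₀ / 2 < Qfun φ x} ∈ nhds x₀ :=
    hcontAt.preimage_mem_nhds (Ioi_mem_nhds (by linarith))
  set S : Set (ℝ × ℝ) := Set.Ioo ε₀ ℓ ×ˢ Set.Ioo (-N) N with hSdef
  have hSopen : IsOpen S := isOpen_Ioo.prod isOpen_Ioo
  have hx₀S : x₀ ∈ S := by
    constructor
    · constructor
      · rw [hε₀def]; linarith
      · exact hx₀.1.2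
    · exact hx₀.2
  have hSsub : S ⊆ Set.Icc ((ε₀,-N) : ℝ × ℝ) ((ℓ,N)) := by
    rw [Icc_prod_eq]
    exact Set.prod_mono Set.Ioo_subset_Icc_self Set.Ioo_subset_Icc_self
  obtain ⟨r, hr0, hball⟩ := Metric.mem_nhds_iff.1
    (Filter.inter_mem hU (hSopen.mem_nhds hx₀S))
  have hballU : Metric.ball x₀ r ⊆ {x : ℝ × ℝ | Qfun φ x₀ / 2 < Qfun φ x} :=
    fun x hx => (hball hx).1
  have hballIcc : Metric.ball x₀ r ⊆ Set.Icc ((ε₀,-N) : ℝ × ℝ) ((ℓ,N)) :=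
    fun x hx => hSsub (hball hx).2
  have hvol_pos : 0 < volume (Metric.ball x₀ r) := Metric.measure_ball_pos volume x₀ hr0
  have hvol_fin : volume (Metric.ball x₀ r) < ⊤ := measure_ball_lt_top
  have hQball : IntegrableOn (Qfun φ) (Metric.ball x₀ r) :=
    (hQint ε₀ hε₀pos hε₀ℓ).mono_set hballIcc
  have h1 : Qfun φ x₀ / 2 * (volume (Metric.ball x₀ r)).toReal
      ≤ ∫ x in Metric.ball x₀ r, Qfun φ x :=
    setIntegral_ge_of_const_le_real measurableSet_ball hvol_fin.ne
      (fun x hx => (hballU hx).le) hQball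
  have h2 : ∫ x in Metric.ball x₀ r, Qfun φ x
      ≤ ∫ x in Set.Icc ((ε₀,-N) : ℝ × ℝ) ((ℓ,N)), Qfun φ x := by
    apply setIntegral_mono_set (hQint ε₀ hε₀pos hε₀ℓ)
      (Filter.Eventually.of_forall (fun x => Qfun_nonneg φ x))
    exact HasSubset.Subset.eventuallyLE hballIcc
  rw [hIzero] at h2
  have h3 : 0 < Qfun φ x₀ / 2 * (volume (Metric.ball x₀ r)).toReal := by
    apply mul_pos (by linarith)
    exact ENNReal.toReal_pos hvol_pos.ne' hvol_fin.ne
  linarith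

/-- The kernel of `L̃ u = u_ss + u_zz + 2 cosh⁻²(s) u` on the strip `[0,ℓ]×[−N,N]`
with the Dirichlet condition at `s = 0`, the Robin condition at `s = ℓ` and Neumann
conditions at `z = ±N` is spanned by `tanh(s)`. -/
theorem kernel_with_robin_is_tanh
    (ℓ N : ℝ) (hℓ : 0 < ℓ) (hN : 0 < N)
    (φ : ℝ × ℝ → ℝ) (hφ : ContDiff ℝ 2 φ)
    (hPDE : ∀ s ∈ Set.Icc (0:ℝ) ℓ, ∀ z ∈ Set.Icc (-N) N,
      deriv (fun s' => deriv (fun s'' => φ (s'', z)) s') s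
        + deriv (fun z' => deriv (fun z'' => φ (s, z'')) z') z
        + 2 * ((Real.cosh s)^2)⁻¹ * φ (s, z) = 0)
    (hDirichlet : ∀ z ∈ Set.Icc (-N) N, φ (0, z) = 0)
    (hRobin : ∀ z ∈ Set.Icc (-N) N,
      deriv (fun s' => φ (s', z)) ℓ * Real.tanh ℓ
        - φ (ℓ, z) * ((Real.cosh ℓ)^2)⁻¹ = 0)
    (hNeumann : ∀ s ∈ Set.Icc (0:ℝ) ℓ,
      deriv (fun z' => φ (s, z')) N = 0 ∧ deriv (fun z' => φ (s, z')) (-N) = 0) :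
    ∃ c : ℝ, ∀ s ∈ Set.Icc (0:ℝ) ℓ, ∀ z ∈ Set.Icc (-N) N,
      φ (s, z) = c * Real.tanh s := by
  have hNN : -N < N := by linarith
  -- restate hypotheses in terms of `fsP`, `fzP`
  have hRobin2 : ∀ z ∈ Set.Icc (-N) N,
      fsP φ (ℓ,z) * Real.tanh ℓ - φ (ℓ,z) * ((Real.cosh ℓ)^2)⁻¹ = 0 := by
    intro z hz
    have h := hRobin z hz
    rwa [(hds hφ (ℓ, z)).deriv] at h
  have hNeu2 : ∀ s ∈ Set.Icc (0:ℝ) ℓ, fzP φ (s,N) = 0 ∧ fzP φ (s,-N) = 0 := by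
    intro s hs
    obtain ⟨h1, h2⟩ := hNeumann s hs
    rw [(hdz hφ (s, N)).deriv] at h1
    rw [(hdz hφ (s, -N)).deriv] at h2
    exact ⟨h1, h2⟩
  have hPDE2 : ∀ x ∈ Set.Icc (0:ℝ) ℓ ×ˢ Set.Icc (-N) N,
      fderiv ℝ (fsP φ) x (1,0) + fderiv ℝ (fzP φ) x (0,1)
        + 2 * ((Real.cosh x.1)^2)⁻¹ * φ x = 0 := by
    rintro ⟨s, z⟩ ⟨hs, hz⟩
    have h := hPDE s hs z hz
    have e1 : (fun s' => deriv (fun s'' => φ (s'', z)) s') = fun s' => fsP φ (s', z) :=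
      funext fun s' => (hds hφ (s', z)).deriv
    have e2 : (fun z' => deriv (fun z'' => φ (s, z'')) z') = fun z' => fzP φ (s, z') :=
      funext fun z' => (hdz hφ (s, z')).deriv
    rw [e1, e2, (hdss hφ (s, z)).deriv, (hdzz hφ (s, z)).deriv] at h
    exact h
  -- `Q` vanishes on the open rectangle
  have hQ0 : ∀ x ∈ Set.Ioo (0:ℝ) ℓ ×ˢ Set.Ioo (-N) N, Qfun φ x = 0 :=
    fun x hx => Q_vanishes hφ hℓ hN hPDE2 hDirichlet hRobin2 hNeu2 hx
  -- hence `W` and `fzP φ` vanish on the open rectangle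
  set W : ℝ × ℝ → ℝ :=
    fun x => Real.tanh x.1 * fsP φ x - ((Real.cosh x.1)^2)⁻¹ * φ x with hWdef
  have hWfz0 : ∀ x ∈ Set.Ioo (0:ℝ) ℓ ×ˢ Set.Ioo (-N) N, W x = 0 ∧ fzP φ x = 0 := by
    intro x hx
    have hq := hQ0 x hx
    rw [Qfun] at hq
    have h1 : (fsP φ x - pfun x.1 * φ x)^2 = 0 ∧ (fzP φ x)^2 = 0 :=
      (add_eq_zero_iff_of_nonneg (sq_nonneg _) (sq_nonneg _)).1 hq
    have h2 : fsP φ x = pfun x.1 * φ x := by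
      have := pow_eq_zero_iff (n := 2) (by norm_num) |>.1 h1.1
      linarith [this]
    have h3 : fzP φ x = 0 := pow_eq_zero_iff (n := 2) (by norm_num) |>.1 h1.2
    have ht : Real.tanh x.1 ≠ 0 := ne_of_gt (tanh_pos' hx.1.1)
    refine ⟨?_, h3⟩
    rw [hWdef]
    simp only
    rw [h2, pfun]
    field_simp
    ring
  -- extend to the closed rectangle by continuity
  have hclosure : closure (Set.Ioo (0:ℝ) ℓ ×ˢ Set.Ioo (-N) N)
      = Set.Icc (0:ℝ) ℓ ×ˢ Set.Icc (-N) N := by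
    rw [closure_prod_eq, closure_Ioo hℓ.ne, closure_Ioo hNN.ne]
  have hWcont : Continuous W := by
    apply Continuous.sub
    · exact (continuous_tanh'.comp continuous_fst).mul (fsP_contDiff hφ).continuous
    · exact (((Real.continuous_cosh.comp continuous_fst).pow 2).inv₀
        (fun x => pow_ne_zero 2 (ne_of_gt (Real.cosh_pos x.1)))).mul hφ.continuous
  have hWR : ∀ x ∈ Set.Icc (0:ℝ) ℓ ×ˢ Set.Icc (-N) N, W x = 0 := by
    intro x hx
    rw [← hclosure] at hx
    exact Set.EqOn.closure (fun y hy => (hWfz0 y hy).1) hWcont continuous_const hx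
  have hfzR : ∀ x ∈ Set.Icc (0:ℝ) ℓ ×ˢ Set.Icc (-N) N, fzP φ x = 0 := by
    intro x hx
    rw [← hclosure] at hx
    exact Set.EqOn.closure (fun y hy => (hWfz0 y hy).2)
      (fzP_contDiff hφ).continuous continuous_const hx
  -- φ is independent of z
  have hzconst : ∀ s ∈ Set.Icc (0:ℝ) ℓ, ∀ z ∈ Set.Icc (-N) N, φ (s, z) = φ (s, -N) := by
    intro s hs z hz
    have := constant_of_has_deriv_right_zero (f := fun z' => φ (s, z')) (a := -N) (b := N)
      ((hφ.continuous.comp (Continuous.prodMk_right s)).continuousOn)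
      (fun z' hz' => by
        have h0 : fzP φ (s, z') = 0 := hfzR (s, z') ⟨hs, ⟨hz'.1, hz'.2.le⟩⟩
        exact (h0 ▸ (hdz hφ (s, z')).hasDerivWithinAt))
      z hz
    exact this
  -- the 1d function is proportional to tanh
  refine ⟨φ (ℓ, -N) / Real.tanh ℓ, ?_⟩
  intro s hs z hz
  rw [hzconst s hs z hz]
  rcases eq_or_lt_of_le hs.1 with h0 | h0
  · rw [← h0, Real.tanh_zero, mul_zero]
    exact hDirichlet (-N) ⟨le_refl _, by linarith⟩
  · -- on (0, ℓ] use that φ(·,-N)/tanh is constant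
    set r : ℝ → ℝ := fun σ => φ (σ, -N) / Real.tanh σ with hrdef
    have hrd : ∀ σ ∈ Set.Ico s ℓ, HasDerivWithinAt r 0 (Set.Ici σ) σ := by
      intro σ hσ
      have hσ0 : 0 < σ := lt_of_lt_of_le h0 hσ.1
      have ht : Real.tanh σ ≠ 0 := ne_of_gt (tanh_pos' hσ0)
      have hd := (hds hφ (σ, -N)).div (tanh_hasDerivAt' σ) ht
      have hnum : fsP φ (σ, -N) * Real.tanh σ - φ (σ, -N) * (Real.cosh σ ^ 2)⁻¹ = 0 := by
        have hw := hWR (σ, -N) ⟨⟨hσ0.le, hσ.2.le⟩, ⟨le_refl _, hNN.le⟩⟩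
        rw [hWdef] at hw
        simp only at hw
        linarith [hw]
      rw [hnum, zero_div] at hd
      exact hd.hasDerivWithinAt
    have hrc : ContinuousOn r (Set.Icc s ℓ) := by
      apply ContinuousOn.div
      · exact (hφ.continuous.comp (continuous_id.prodMk continuous_const)).continuousOn
      · exact continuous_tanh'.continuousOn
      · exact fun σ hσ => ne_of_gt (tanh_pos' (lt_of_lt_of_le h0 hσ.1))
    have hconst := constant_of_has_deriv_right_zero hrc hrd ℓ
      (Set.right_mem_Icc.2 hs.2)
    -- hconst : r ℓ = r s
    have ht : Real.tanh s ≠ 0 := ne_of_gt (tanh_pos' h0)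
    have : φ (s, -N) / Real.tanh s = φ (ℓ, -N) / Real.tanh ℓ := by
      rw [hrdef] at hconst
      simpa using hconst.symm
    rw [div_eq_iff ht] at this
    rw [this]
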